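/- Let R = (r_{|i−j|})_{p×p} be a symmetric positive definite Toeplitz correlation matrix with r_0 = 1, T = R^{1/2} its symmetric square root, and C = (c_{km}) = (T^{⊙2})², where ⊙ denotes the Hadamard (entrywise) product and A^{⊙2} = A ⊙ A. Let ε_1, ..., ε_n be i.i.d. p-dimensional random vectors whose components are i.i.d. with mean 0, variance 1 and fourth moment κ_4, and set X_i = T ε_i with coordinates x_{i,k}. For 1 ≤ i < j ≤ n set y_{k,(i,j)} = (x_{i,k} − x_{j,k})². Then: Var(y_{k,(i,j)}) = 8 + 2 c_{kk}(κ_4 − 3); for pairwise distinct i, j, l, Cov(y_{k,(i,j)}, y_{k,(i,l)}) = 2 + c_{kk}(κ_4 − 3); for k ≠ m, Cov(y_{k,(i,j)}, y_{m,(i,j)}) = 8 r_{|k−m|}² + 2 c_{km}(κ_4 − 3); and for k ≠ m and pairwise distinct i, j, l, Cov(y_{k,(i,j)}, y_{m,(i,l)}) = 2 r_{|k−m|}² + c_{km}(κ_4 − 3). -/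

import Mathlib

open Filter MeasureTheory ProbabilityTheory Matrix

/-- Covariance of two real random variables: `Cov(f,g) = E[fg] - E[f]·E[g]`. -/
noncomputable def cov {Ω : Type*} [MeasurableSpace Ω] (μ : Measure Ω) (f g : Ω → ℝ) : ℝ :=
  (∫ ω, f ω * g ω ∂μ) - (∫ ω, f ω ∂μ) * (∫ ω, g ω ∂μ)


open scoped ENNReal
set_option linter.unusedSectionVars false
set_option maxHeartbeats 2000000
set_option linter.unusedVariables false
set_option linter.unreachableTactic false
set_option linter.unusedTactic false

section Aux
variable {Ω : Type*} [MeasurableSpace Ω] {μ : Measure Ω} [IsProbabilityMeasure μ]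

lemma aux_mem2 {f g : Ω → ℝ} (hf : MemLp f 4 μ) (hg : MemLp g 4 μ) :
    MemLp (fun ω => f ω * g ω) 2 μ := by
  have h := MemLp.smul (μ := μ) (f := g) (φ := f) hg hf (p := 4) (q := 4) (r := 2)
    (hpqr := ⟨by
        rw [← two_mul, show (4:ℝ≥0∞) = 2*2 by norm_num,
      ENNReal.mul_inv (by norm_num) (by norm_num), ← mul_assoc,
      ENNReal.mul_inv_cancel (by norm_num) (by norm_num), one_mul]⟩)
  exact h

lemma aux_int2 {f g : Ω → ℝ} (hf : MemLp f 2 μ) (hg : MemLp g 2 μ) :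
    Integrable (fun ω => f ω * g ω) μ := by
  have h := MemLp.smul (μ := μ) (f := g) (φ := f) hg hf (p := 2) (q := 2) (r := 1)
    (hpqr := ⟨by rw [inv_one, ENNReal.inv_two_add_inv_two]⟩)
  have h2 : MemLp (fun ω => f ω * g ω) 1 μ := by exact h
  exact h2.integrable le_rfl

lemma aux_int4 {f1 f2 f3 f4 : Ω → ℝ} (h1 : MemLp f1 4 μ) (h2 : MemLp f2 4 μ)
    (h3 : MemLp f3 4 μ) (h4 : MemLp f4 4 μ) :
    Integrable (fun ω => f1 ω * f2 ω * f3 ω * f4 ω) μ := by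
  have h := aux_int2 (aux_mem2 h1 h2) (aux_mem2 h3 h4)
  have e : (fun ω => f1 ω * f2 ω * f3 ω * f4 ω)
      = fun ω => (f1 ω * f2 ω) * (f3 ω * f4 ω) := funext fun ω => by ring
  rw [e]; exact h

end Aux

section Moments
variable {Ω : Type*} [MeasurableSpace Ω] {μ : Measure Ω} [IsProbabilityMeasure μ]
variable {ι : Type*} [DecidableEq ι] {f : ι → Ω → ℝ} {κ4 : ℝ}

variable (hm : ∀ q, Measurable (f q)) (hind : iIndepFun f μ)
variable (hmean : ∀ q, ∫ ω, f q ω ∂μ = 0) (hvar : ∀ q, ∫ ω, (f q ω)^2 ∂μ = 1)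
variable (h4 : ∀ q, ∫ ω, (f q ω)^4 ∂μ = κ4)

include hm hind hmean hvar in
lemma mom2 (q1 q2 : ι) : ∫ ω, f q1 ω * f q2 ω ∂μ = if q1 = q2 then 1 else 0 := by
  split_ifs with h
  · subst h; simp_rw [← sq]; exact hvar q1
  · rw [(hind.indepFun h).integral_fun_mul_eq_mul_integral (hm q1).aestronglyMeasurable
      (hm q2).aestronglyMeasurable, hmean, hmean, mul_zero]

include hm hind hmean in
lemma mom31 (a b : ι) (hab : a ≠ b) : ∫ ω, (f a ω)^3 * f b ω ∂μ = 0 := by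
  have hi : IndepFun (fun ω => (f a ω)^3) (f b) μ :=
    (hind.indepFun hab).comp (measurable_id.pow_const 3) measurable_id
  rw [hi.integral_fun_mul_eq_mul_integral ((hm a).pow_const 3).aestronglyMeasurable
    (hm b).aestronglyMeasurable, hmean b, mul_zero]

include hm hind hmean hvar in
lemma split4 (q1 q2 q3 q4 : ι) (h13 : q1 ≠ q3) (h14 : q1 ≠ q4) (h23 : q2 ≠ q3) (h24 : q2 ≠ q4) :
    ∫ ω, f q1 ω * f q2 ω * f q3 ω * f q4 ω ∂μ
      = (if q1 = q2 then (1:ℝ) else 0) * (if q3 = q4 then (1:ℝ) else 0) := by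
  have hi : IndepFun (f q1 * f q2) (f q3 * f q4) μ :=
    hind.indepFun_mul_mul hm q1 q2 q3 q4 h13 h14 h23 h24
  have e : (fun ω => f q1 ω * f q2 ω * f q3 ω * f q4 ω)
      = fun ω => (f q1 * f q2) ω * (f q3 * f q4) ω := funext fun ω => by
    simp only [Pi.mul_apply]; ring
  rw [e, hi.integral_fun_mul_eq_mul_integral ((hm q1).mul (hm q2)).aestronglyMeasurable
    ((hm q3).mul (hm q4)).aestronglyMeasurable]
  have e1 : ∫ ω, (f q1 * f q2) ω ∂μ = ∫ ω, f q1 ω * f q2 ω ∂μ := rfl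
  have e2 : ∫ ω, (f q3 * f q4) ω ∂μ = ∫ ω, f q3 ω * f q4 ω ∂μ := rfl
  rw [e1, e2, mom2 hm hind hmean hvar, mom2 hm hind hmean hvar]

include hm hind hmean hvar h4 in
lemma mom4 (q1 q2 q3 q4 : ι) :
    ∫ ω, f q1 ω * f q2 ω * f q3 ω * f q4 ω ∂μ =
      (if q1 = q2 then (1:ℝ) else 0) * (if q3 = q4 then (1:ℝ) else 0)
      + (if q1 = q3 then (1:ℝ) else 0) * (if q2 = q4 then (1:ℝ) else 0)
      + (if q1 = q4 then (1:ℝ) else 0) * (if q2 = q3 then (1:ℝ) else 0)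
      + (if q1 = q2 ∧ q2 = q3 ∧ q3 = q4 then κ4 - 3 else 0) := by
  by_cases h12 : q1 = q2
  · subst h12
    by_cases h13 : q1 = q3
    · subst h13
      by_cases h14 : q1 = q4
      · subst h14
        rw [show (fun ω => f q1 ω * f q1 ω * f q1 ω * f q1 ω) = fun ω => (f q1 ω)^4
          from funext fun ω => by ring, h4 q1]
        simp; ring
      · rw [show (fun ω => f q1 ω * f q1 ω * f q1 ω * f q4 ω) = fun ω => (f q1 ω)^3 * f q4 ω
          from funext fun ω => by ring, mom31 hm hind hmean q1 q4 h14]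
        simp [h14]
    · by_cases h14 : q1 = q4
      · subst h14
        rw [show (fun ω => f q1 ω * f q1 ω * f q3 ω * f q1 ω) = fun ω => (f q1 ω)^3 * f q3 ω
          from funext fun ω => by ring, mom31 hm hind hmean q1 q3 h13]
        simp [h13, Ne.symm h13]
      · rw [split4 hm hind hmean hvar q1 q1 q3 q4 h13 h14 h13 h14]
        simp [h13, h14]
  · by_cases h13 : q1 = q3
    · subst h13
      by_cases h24 : q2 = q4
      · subst h24
        rw [show (fun ω => f q1 ω * f q2 ω * f q1 ω * f q2 ω)
            = fun ω => f q1 ω * f q1 ω * f q2 ω * f q2 ω from funext fun ω => by ring,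
          split4 hm hind hmean hvar q1 q1 q2 q2 h12 h12 h12 h12]
        simp [h12]
      · by_cases h14 : q1 = q4
        · subst h14
          rw [show (fun ω => f q1 ω * f q2 ω * f q1 ω * f q1 ω) = fun ω => (f q1 ω)^3 * f q2 ω
            from funext fun ω => by ring, mom31 hm hind hmean q1 q2 h12]
          simp [h12, h24, Ne.symm h12]
        · rw [show (fun ω => f q1 ω * f q2 ω * f q1 ω * f q4 ω)
              = fun ω => f q1 ω * f q1 ω * f q2 ω * f q4 ω from funext fun ω => by ring,
            split4 hm hind hmean hvar q1 q1 q2 q4 h12 h14 h12 h14]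
          simp [h12, h14, h24]
    · by_cases h14 : q1 = q4
      · subst h14
        by_cases h23 : q2 = q3
        · subst h23
          rw [show (fun ω => f q1 ω * f q2 ω * f q2 ω * f q1 ω)
              = fun ω => f q1 ω * f q1 ω * f q2 ω * f q2 ω from funext fun ω => by ring,
            split4 hm hind hmean hvar q1 q1 q2 q2 h12 h12 h12 h12]
          simp [h12, h13]
        · rw [show (fun ω => f q1 ω * f q2 ω * f q3 ω * f q1 ω)
              = fun ω => f q1 ω * f q1 ω * f q2 ω * f q3 ω from funext fun ω => by ring,
            split4 hm hind hmean hvar q1 q1 q2 q3 h12 h13 h12 h13]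
          simp [h12, h13, h23]
      · by_cases h23 : q2 = q3
        · subst h23
          by_cases h24 : q2 = q4
          · subst h24
            rw [show (fun ω => f q1 ω * f q2 ω * f q2 ω * f q2 ω)
                = fun ω => (f q2 ω)^3 * f q1 ω from funext fun ω => by ring,
              mom31 hm hind hmean q2 q1 (Ne.symm h12)]
            simp [h12, h13, h14]
          · rw [show (fun ω => f q1 ω * f q2 ω * f q2 ω * f q4 ω)
                = fun ω => f q1 ω * f q4 ω * f q2 ω * f q2 ω from funext fun ω => by ring,
              split4 hm hind hmean hvar q1 q4 q2 q2 h12 h12 (Ne.symm h24) (Ne.symm h24)]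
            simp [h12, h13, h14, h24]
        · by_cases h24 : q2 = q4
          · subst h24
            rw [show (fun ω => f q1 ω * f q2 ω * f q3 ω * f q2 ω)
                = fun ω => f q1 ω * f q3 ω * f q2 ω * f q2 ω from funext fun ω => by ring,
              split4 hm hind hmean hvar q1 q3 q2 q2 h12 h12 (Ne.symm h23) (Ne.symm h23)]
            simp [h12, h13, h14, h23]
          · rw [split4 hm hind hmean hvar q1 q2 q3 q4 h13 h14 h23 h24]
            simp [h12, h13, h14, h23, h24]

end Moments

lemma alg {p : ℕ} (φ ψ : Fin p → ℝ) (β γ : ℝ) :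
    (∑ z : (Fin p × Fin p) × Fin p × Fin p, (φ z.1.1 * φ z.1.2 * (ψ z.2.1 * ψ z.2.2)) *
       (4 * (if z.1.1 = z.1.2 then (1:ℝ) else 0) * (if z.2.1 = z.2.2 then (1:ℝ) else 0)
        + β * ((if z.1.1 = z.2.1 then (1:ℝ) else 0) * (if z.1.2 = z.2.2 then (1:ℝ) else 0)
             + (if z.1.1 = z.2.2 then (1:ℝ) else 0) * (if z.1.2 = z.2.1 then (1:ℝ) else 0))
        + (if z.1.1 = z.1.2 ∧ z.1.2 = z.2.1 ∧ z.2.1 = z.2.2 then γ else 0)))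
    = 4 * (∑ a, (φ a)^2) * (∑ a, (ψ a)^2) + 2*β*(∑ a, φ a * ψ a)^2
      + γ * ∑ a, (φ a)^2 * (ψ a)^2 := by
  have key : ∀ (f g : Fin p → ℝ) (c : ℝ),
      (∑ x, ∑ y, f x * g y * c) = (∑ x, f x) * (∑ y, g y) * c := by
    intro f g c
    rw [Finset.sum_mul_sum, Finset.sum_mul]
    exact Finset.sum_congr rfl fun x _ => by rw [Finset.sum_mul]
  rw [Fintype.sum_prod_type]
  simp only [Fintype.sum_prod_type]
  simp only [mul_add, add_mul, Finset.sum_add_distrib, mul_ite, ite_mul, mul_zero, zero_mul,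
    mul_one, one_mul, ite_and, Finset.sum_ite_irrel, Finset.sum_const_zero, Finset.sum_ite_eq,
    Finset.sum_ite_eq', Finset.mem_univ, if_true]
  have r1 : (∑ x : Fin p, ∑ y : Fin p, φ x * φ x * (ψ y * ψ y) * 4)
      = (∑ a, (φ a)^2) * (∑ a, (ψ a)^2) * 4 := by
    rw [← key (fun a => φ a ^ 2) (fun a => ψ a ^ 2) 4]
    exact Finset.sum_congr rfl fun x _ => Finset.sum_congr rfl fun y _ => by ring
  have r2 : (∑ x : Fin p, ∑ y : Fin p, φ x * φ y * (ψ x * ψ y) * β)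
      = (∑ a, φ a * ψ a) * (∑ a, φ a * ψ a) * β := by
    rw [← key (fun a => φ a * ψ a) (fun a => φ a * ψ a) β]
    exact Finset.sum_congr rfl fun x _ => Finset.sum_congr rfl fun y _ => by ring
  have r2' : (∑ x : Fin p, ∑ y : Fin p, φ x * φ y * (ψ y * ψ x) * β)
      = (∑ a, φ a * ψ a) * (∑ a, φ a * ψ a) * β := by
    rw [← key (fun a => φ a * ψ a) (fun a => φ a * ψ a) β]
    exact Finset.sum_congr rfl fun x _ => Finset.sum_congr rfl fun y _ => by ring
  have r3 : (∑ x : Fin p, φ x * φ x * (ψ x * ψ x) * γ)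
      = (∑ a, (φ a)^2 * (ψ a)^2) * γ := by
    rw [Finset.sum_mul]
    exact Finset.sum_congr rfl fun x _ => by ring
  rw [r1, r2, r2', r3]
  ring

lemma master {Ω : Type*} [MeasurableSpace Ω] {μ : Measure Ω} [IsProbabilityMeasure μ]
    {p : ℕ} (u v : Fin p → Ω → ℝ) (φ ψ : Fin p → ℝ) (β γ : ℝ)
    (hu4 : ∀ a, MemLp (u a) 4 μ) (hv4 : ∀ a, MemLp (v a) 4 μ)
    (h2u : ∀ a b, ∫ ω, u a ω * u b ω ∂μ = 2 * (if a = b then (1:ℝ) else 0))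
    (h2v : ∀ a b, ∫ ω, v a ω * v b ω ∂μ = 2 * (if a = b then (1:ℝ) else 0))
    (hm4 : ∀ a b c d, ∫ ω, u a ω * u b ω * v c ω * v d ω ∂μ =
        4 * (if a = b then (1:ℝ) else 0) * (if c = d then (1:ℝ) else 0)
        + β * ((if a = c then (1:ℝ) else 0) * (if b = d then (1:ℝ) else 0)
             + (if a = d then (1:ℝ) else 0) * (if b = c then (1:ℝ) else 0))
        + (if a = b ∧ b = c ∧ c = d then γ else 0)) :
    cov μ (fun ω => (∑ a, φ a * u a ω)^2) (fun ω => (∑ c, ψ c * v c ω)^2)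
      = 2*β*(∑ a, φ a * ψ a)^2 + γ * ∑ a, (φ a)^2 * (ψ a)^2 := by
  have peu : (fun ω => (∑ a, φ a * u a ω)^2)
      = fun ω => ∑ x : Fin p × Fin p, (φ x.1 * φ x.2) * (u x.1 ω * u x.2 ω) := by
    funext ω
    rw [sq, Finset.sum_mul_sum, Fintype.sum_prod_type]
    exact Finset.sum_congr rfl fun a _ => Finset.sum_congr rfl fun b _ => by ring
  have pev : (fun ω => (∑ c, ψ c * v c ω)^2)
      = fun ω => ∑ x : Fin p × Fin p, (ψ x.1 * ψ x.2) * (v x.1 ω * v x.2 ω) := by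
    funext ω
    rw [sq, Finset.sum_mul_sum, Fintype.sum_prod_type]
    exact Finset.sum_congr rfl fun a _ => Finset.sum_congr rfl fun b _ => by ring
  have mean_gen : ∀ (w : Fin p → Ω → ℝ) (χ : Fin p → ℝ), (∀ a, MemLp (w a) 4 μ) →
      (∀ a b, ∫ ω, w a ω * w b ω ∂μ = 2 * (if a = b then (1:ℝ) else 0)) →
      ((fun ω => (∑ a, χ a * w a ω)^2)
        = fun ω => ∑ x : Fin p × Fin p, (χ x.1 * χ x.2) * (w x.1 ω * w x.2 ω)) →
      ∫ ω, (∑ a, χ a * w a ω)^2 ∂μ = 2 * ∑ a, (χ a)^2 := by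
    intro w χ hw4 h2 pe
    rw [pe, integral_finset_sum _ (fun x _ =>
      (aux_int2 ((hw4 x.1).mono_exponent (by norm_num))
        ((hw4 x.2).mono_exponent (by norm_num))).const_mul _)]
    calc ∑ x : Fin p × Fin p, ∫ ω, (χ x.1 * χ x.2) * (w x.1 ω * w x.2 ω) ∂μ
        = ∑ x : Fin p × Fin p, (χ x.1 * χ x.2) * (2 * if x.1 = x.2 then 1 else 0) :=
          Finset.sum_congr rfl fun x _ => by rw [integral_const_mul, h2]
      _ = 2 * ∑ a, (χ a)^2 := by
          rw [Fintype.sum_prod_type]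
          simp only [mul_ite, ite_mul, mul_zero, mul_one, zero_mul, one_mul,
            Finset.sum_ite_eq, Finset.sum_ite_eq', Finset.mem_univ, if_true]
          rw [Finset.mul_sum]
          exact Finset.sum_congr rfl fun a _ => by ring
  have pe2 : (fun ω => (∑ a, φ a * u a ω)^2 * (∑ c, ψ c * v c ω)^2)
      = fun ω => ∑ z : (Fin p × Fin p) × Fin p × Fin p,
          (φ z.1.1 * φ z.1.2 * (ψ z.2.1 * ψ z.2.2))
            * (u z.1.1 ω * u z.1.2 ω * v z.2.1 ω * v z.2.2 ω) := by
    funext ω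
    rw [congrFun peu ω, congrFun pev ω, Finset.sum_mul_sum]
    conv_rhs => rw [Fintype.sum_prod_type]
    exact Finset.sum_congr rfl fun x _ => Finset.sum_congr rfl fun y _ => by ring
  have hint : ∫ ω, (∑ a, φ a * u a ω)^2 * (∑ c, ψ c * v c ω)^2 ∂μ
      = ∑ z : (Fin p × Fin p) × Fin p × Fin p, (φ z.1.1 * φ z.1.2 * (ψ z.2.1 * ψ z.2.2)) *
       (4 * (if z.1.1 = z.1.2 then (1:ℝ) else 0) * (if z.2.1 = z.2.2 then (1:ℝ) else 0)
        + β * ((if z.1.1 = z.2.1 then (1:ℝ) else 0) * (if z.1.2 = z.2.2 then (1:ℝ) else 0)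
             + (if z.1.1 = z.2.2 then (1:ℝ) else 0) * (if z.1.2 = z.2.1 then (1:ℝ) else 0))
        + (if z.1.1 = z.1.2 ∧ z.1.2 = z.2.1 ∧ z.2.1 = z.2.2 then γ else 0)) := by
    rw [show (∫ ω, (∑ a, φ a * u a ω)^2 * (∑ c, ψ c * v c ω)^2 ∂μ)
        = ∫ ω, ∑ z : (Fin p × Fin p) × Fin p × Fin p,
          (φ z.1.1 * φ z.1.2 * (ψ z.2.1 * ψ z.2.2))
            * (u z.1.1 ω * u z.1.2 ω * v z.2.1 ω * v z.2.2 ω) ∂μ from by rw [← pe2]]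
    rw [integral_finset_sum _ (fun z _ =>
      (aux_int4 (hu4 z.1.1) (hu4 z.1.2) (hv4 z.2.1) (hv4 z.2.2)).const_mul _)]
    exact Finset.sum_congr rfl fun z _ => by rw [integral_const_mul, hm4]
  rw [cov, hint, mean_gen u φ hu4 h2u peu, mean_gen v ψ hv4 h2v pev, alg φ ψ β γ]
  ring

section Expand
variable {Ω : Type*} [MeasurableSpace Ω] {μ : Measure Ω}

def sg : Fin 2 → ℝ := ![1, -1]

@[simp] lemma sg0 : sg 0 = 1 := rfl
@[simp] lemma sg1 : sg 1 = -1 := rfl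

lemma expand4 (f g : Fin 2 → Ω → ℝ)
    (hint : ∀ t s, Integrable (fun ω => f t ω * g s ω) μ) :
    ∫ ω, (f 0 ω - f 1 ω) * (g 0 ω - g 1 ω) ∂μ
      = ∑ t : Fin 2 × Fin 2, sg t.1 * sg t.2 * ∫ ω, f t.1 ω * g t.2 ω ∂μ := by
  have pe : (fun ω => (f 0 ω - f 1 ω) * (g 0 ω - g 1 ω))
      = fun ω => ∑ t : Fin 2 × Fin 2, sg t.1 * sg t.2 * (f t.1 ω * g t.2 ω) := by
    funext ω
    rw [Fintype.sum_prod_type]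
    simp [Fin.sum_univ_two]
    ring
  rw [pe, integral_finset_sum _ (fun t _ => (hint t.1 t.2).const_mul _)]
  exact Finset.sum_congr rfl fun t _ => integral_const_mul _ _

lemma expand16 (f g h k : Fin 2 → Ω → ℝ)
    (hint : ∀ t1 t2 t3 t4, Integrable (fun ω => f t1 ω * g t2 ω * h t3 ω * k t4 ω) μ) :
    ∫ ω, (f 0 ω - f 1 ω) * (g 0 ω - g 1 ω) * (h 0 ω - h 1 ω) * (k 0 ω - k 1 ω) ∂μ
      = ∑ t : (Fin 2 × Fin 2) × Fin 2 × Fin 2,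
          sg t.1.1 * sg t.1.2 * sg t.2.1 * sg t.2.2 *
            ∫ ω, f t.1.1 ω * g t.1.2 ω * h t.2.1 ω * k t.2.2 ω ∂μ := by
  have pe : (fun ω => (f 0 ω - f 1 ω) * (g 0 ω - g 1 ω) * (h 0 ω - h 1 ω) * (k 0 ω - k 1 ω))
      = fun ω => ∑ t : (Fin 2 × Fin 2) × Fin 2 × Fin 2,
          sg t.1.1 * sg t.1.2 * sg t.2.1 * sg t.2.2
            * (f t.1.1 ω * g t.1.2 ω * h t.2.1 ω * k t.2.2 ω) := by
    funext ω
    simp only [Fintype.sum_prod_type, Fin.sum_univ_two]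
    simp
    ring
  rw [pe, integral_finset_sum _ (fun t _ => (hint t.1.1 t.1.2 t.2.1 t.2.2).const_mul _)]
  exact Finset.sum_congr rfl fun t _ => integral_const_mul _ _

end Expand

theorem stmt9 {Ω : Type*} [MeasurableSpace Ω] (μ : Measure Ω) [IsProbabilityMeasure μ]
    (n p : ℕ) (r : ℕ → ℝ) (hr0 : r 0 = 1)
    (R T C : Matrix (Fin p) (Fin p) ℝ)
    (hR : ∀ k m : Fin p, R k m = r ((k : ℤ) - (m : ℤ)).natAbs)
    (hRpd : R.PosDef) (hTsymm : T.IsSymm) (hTpsd : T.PosSemidef) (hT : T * T = R)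
    (hC : C = T.hadamard T * T.hadamard T)
    (κ4 : ℝ) (ε : Fin n → Ω → Fin p → ℝ)
    (hmeas : ∀ i, Measurable (ε i))
    -- the n·p components ε_{ij} are jointly independent
    (hindep : iIndepFun
      (fun q : Fin n × Fin p => fun ω => ε q.1 ω q.2) μ)
    -- and identically distributed
    (hident : ∀ (i i' : Fin n) (j j' : Fin p),
      IdentDistrib (fun ω => ε i ω j) (fun ω => ε i' ω j') μ μ)
    (hL4 : ∀ i j, MemLp (fun ω => ε i ω j) 4 μ)
    (hmean : ∀ i j, ∫ ω, ε i ω j ∂μ = 0)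
    (hvar : ∀ i j, ∫ ω, (ε i ω j) ^ 2 ∂μ = 1)
    (hfourth : ∀ i j, ∫ ω, (ε i ω j) ^ 4 ∂μ = κ4)
    -- X_i = T ε_i, with coordinates x_{i,k}
    (X : Fin n → Ω → Fin p → ℝ) (hX : ∀ i ω, X i ω = T.mulVec (ε i ω)) :
    (∀ (i j : Fin n) (k : Fin p), i ≠ j →
      cov μ (fun ω => (X i ω k - X j ω k) ^ 2) (fun ω => (X i ω k - X j ω k) ^ 2) =
        8 + 2 * C k k * (κ4 - 3)) ∧
    (∀ (i j l : Fin n) (k : Fin p), i ≠ j → i ≠ l → j ≠ l →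
      cov μ (fun ω => (X i ω k - X j ω k) ^ 2) (fun ω => (X i ω k - X l ω k) ^ 2) =
        2 + C k k * (κ4 - 3)) ∧
    (∀ (i j : Fin n) (k m : Fin p), i ≠ j → k ≠ m →
      cov μ (fun ω => (X i ω k - X j ω k) ^ 2) (fun ω => (X i ω m - X j ω m) ^ 2) =
        8 * r ((k : ℤ) - (m : ℤ)).natAbs ^ 2 + 2 * C k m * (κ4 - 3)) ∧
    (∀ (i j l : Fin n) (k m : Fin p), i ≠ j → i ≠ l → j ≠ l → k ≠ m →
      cov μ (fun ω => (X i ω k - X j ω k) ^ 2) (fun ω => (X i ω m - X l ω m) ^ 2) =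
        2 * r ((k : ℤ) - (m : ℤ)).natAbs ^ 2 + C k m * (κ4 - 3)) := by
  classical
  set e : Fin n × Fin p → Ω → ℝ := fun q => fun ω => ε q.1 ω q.2 with he
  have hme : ∀ q, Measurable (e q) := fun q => (measurable_pi_apply q.2).comp (hmeas q.1)
  have hL4e : ∀ q : Fin n × Fin p, MemLp (e q) 4 μ := fun q => hL4 q.1 q.2
  have hmean_e : ∀ q, ∫ ω, e q ω ∂μ = 0 := fun q => hmean q.1 q.2
  have hvar_e : ∀ q, ∫ ω, (e q ω)^2 ∂μ = 1 := fun q => hvar q.1 q.2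
  have h4_e : ∀ q, ∫ ω, (e q ω)^4 ∂μ = κ4 := fun q => hfourth q.1 q.2
  have hind_e : iIndepFun e μ := hindep
  have emom4 := mom4 hme hind_e hmean_e hvar_e h4_e
  -- matrix entry identities
  have hRkm : ∀ k m : Fin p, (∑ a, T k a * T m a) = r (((k:ℤ) - (m:ℤ)).natAbs) := by
    intro k m
    rw [← hR k m, ← hT, Matrix.mul_apply]
    exact Finset.sum_congr rfl fun a _ => by rw [hTsymm.apply a m]
  have hRkk : ∀ k : Fin p, (∑ a, T k a * T k a) = 1 := by
    intro k; rw [hRkm k k]; simp [hr0]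
  have hCkm : ∀ k m : Fin p, (∑ a, (T k a)^2 * (T m a)^2) = C k m := by
    intro k m
    rw [hC, Matrix.mul_apply]
    exact Finset.sum_congr rfl fun a _ => by
      rw [Matrix.hadamard_apply, Matrix.hadamard_apply, hTsymm.apply a m]; ring
  -- second moments of differences
  have key2 : ∀ (i j : Fin n), i ≠ j → ∀ a b : Fin p,
      ∫ ω, (e (i,a) ω - e (j,a) ω) * (e (i,b) ω - e (j,b) ω) ∂μ
        = 2 * (if a = b then (1:ℝ) else 0) := by
    intro i j hij a b
    have emom2 := mom2 hme hind_e hmean_e hvar_e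
    set F : Fin p → Fin 2 → Ω → ℝ := fun x => ![e (i,x), e (j,x)] with hFdef
    have hFm : ∀ x t, MemLp (F x t) 4 μ := by
      intro x t
      fin_cases t
      · exact hL4e (i,x)
      · exact hL4e (j,x)
    have hint : ∀ t s, Integrable (fun ω => F a t ω * F b s ω) μ := fun t s =>
      aux_int2 ((hFm a t).mono_exponent (by norm_num))
        ((hFm b s).mono_exponent (by norm_num))
    have H := expand4 (μ := μ) (F a) (F b) hint
    simp only [Fintype.sum_prod_type, Fin.sum_univ_two, sg0, sg1, hFdef,
      Matrix.cons_val_zero, Matrix.cons_val_one, Matrix.head_cons] at H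
    rw [H]
    simp only [emom2, Prod.mk.injEq]
    simp [hij, Ne.symm hij]
    split_ifs <;> ring
  -- fourth moments, same pair
  have key4same : ∀ (i j : Fin n), i ≠ j → ∀ a b c d : Fin p,
      ∫ ω, (e (i,a) ω - e (j,a) ω) * (e (i,b) ω - e (j,b) ω)
          * (e (i,c) ω - e (j,c) ω) * (e (i,d) ω - e (j,d) ω) ∂μ
      = 4 * (if a = b then (1:ℝ) else 0) * (if c = d then (1:ℝ) else 0)
        + 4 * ((if a = c then (1:ℝ) else 0) * (if b = d then (1:ℝ) else 0)
             + (if a = d then (1:ℝ) else 0) * (if b = c then (1:ℝ) else 0))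
        + (if a = b ∧ b = c ∧ c = d then 2*κ4 - 6 else 0) := by
    intro i j hij a b c d
    set F : Fin p → Fin 2 → Ω → ℝ := fun x => ![e (i,x), e (j,x)] with hFdef
    have hFm : ∀ x t, MemLp (F x t) 4 μ := by
      intro x t
      fin_cases t
      · exact hL4e (i,x)
      · exact hL4e (j,x)
    have hint : ∀ t1 t2 t3 t4, Integrable (fun ω => F a t1 ω * F b t2 ω * F c t3 ω * F d t4 ω) μ :=
      fun t1 t2 t3 t4 => aux_int4 (hFm a t1) (hFm b t2) (hFm c t3) (hFm d t4)
    have H := expand16 (μ := μ) (F a) (F b) (F c) (F d) hint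
    simp only [Fintype.sum_prod_type, Fin.sum_univ_two, sg0, sg1, hFdef,
      Matrix.cons_val_zero, Matrix.cons_val_one, Matrix.head_cons] at H
    rw [H]
    simp only [emom4, Prod.mk.injEq]
    simp [hij, Ne.symm hij]
    split_ifs <;> first | ring | (exfalso; simp_all)
  -- fourth moments, overlapping pairs
  have key4cross : ∀ (i j l : Fin n), i ≠ j → i ≠ l → j ≠ l → ∀ a b c d : Fin p,
      ∫ ω, (e (i,a) ω - e (j,a) ω) * (e (i,b) ω - e (j,b) ω)
          * (e (i,c) ω - e (l,c) ω) * (e (i,d) ω - e (l,d) ω) ∂μ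
      = 4 * (if a = b then (1:ℝ) else 0) * (if c = d then (1:ℝ) else 0)
        + 1 * ((if a = c then (1:ℝ) else 0) * (if b = d then (1:ℝ) else 0)
             + (if a = d then (1:ℝ) else 0) * (if b = c then (1:ℝ) else 0))
        + (if a = b ∧ b = c ∧ c = d then κ4 - 3 else 0) := by
    intro i j l hij hil hjl a b c d
    set F : Fin p → Fin 2 → Ω → ℝ := fun x => ![e (i,x), e (j,x)] with hFdef
    set G : Fin p → Fin 2 → Ω → ℝ := fun x => ![e (i,x), e (l,x)] with hGdef
    have hFm : ∀ x t, MemLp (F x t) 4 μ := by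
      intro x t
      fin_cases t
      · exact hL4e (i,x)
      · exact hL4e (j,x)
    have hGm : ∀ x t, MemLp (G x t) 4 μ := by
      intro x t
      fin_cases t
      · exact hL4e (i,x)
      · exact hL4e (l,x)
    have hint : ∀ t1 t2 t3 t4, Integrable (fun ω => F a t1 ω * F b t2 ω * G c t3 ω * G d t4 ω) μ :=
      fun t1 t2 t3 t4 => aux_int4 (hFm a t1) (hFm b t2) (hGm c t3) (hGm d t4)
    have H := expand16 (μ := μ) (F a) (F b) (G c) (G d) hint
    simp only [Fintype.sum_prod_type, Fin.sum_univ_two, sg0, sg1, hFdef, hGdef,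
      Matrix.cons_val_zero, Matrix.cons_val_one, Matrix.head_cons] at H
    rw [H]
    simp only [emom4, Prod.mk.injEq]
    simp [hij, hil, hjl, Ne.symm hij, Ne.symm hil, Ne.symm hjl]
    split_ifs <;> first | ring | (exfalso; simp_all)
  -- difference of coordinates as linear combination
  have hXd : ∀ (i j : Fin n) (k : Fin p),
      (fun ω => (X i ω k - X j ω k)^2)
        = fun ω => (∑ a, T k a * (e (i,a) ω - e (j,a) ω))^2 := by
    intro i j k
    funext ω
    rw [hX i ω, hX j ω]
    simp only [Matrix.mulVec, dotProduct, he]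
    rw [← Finset.sum_sub_distrib]
    congr 1
    exact Finset.sum_congr rfl fun x _ => by ring
  have hmemdiff : ∀ (i j : Fin n) (a : Fin p),
      MemLp (fun ω => e (i,a) ω - e (j,a) ω) 4 μ := fun i j a =>
    (hL4e (i,a)).sub (hL4e (j,a))
  refine ⟨?_, ?_, ?_, ?_⟩
  · intro i j k hij
    rw [hXd i j k]
    have H := master (μ := μ) (fun a ω => e (i,a) ω - e (j,a) ω) (fun a ω => e (i,a) ω - e (j,a) ω)
      (fun a => T k a) (fun a => T k a) 4 (2*κ4 - 6)
      (fun a => hmemdiff i j a) (fun a => hmemdiff i j a)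
      (fun a b => key2 i j hij a b) (fun a b => key2 i j hij a b)
      (fun a b c d => key4same i j hij a b c d)
    simp only [] at H
    rw [H, hRkk k, hCkm k k]
    ring
  · intro i j l k hij hil hjl
    rw [hXd i j k, hXd i l k]
    have H := master (μ := μ) (fun a ω => e (i,a) ω - e (j,a) ω) (fun a ω => e (i,a) ω - e (l,a) ω)
      (fun a => T k a) (fun a => T k a) 1 (κ4 - 3)
      (fun a => hmemdiff i j a) (fun a => hmemdiff i l a)
      (fun a b => key2 i j hij a b) (fun a b => key2 i l hil a b)
      (fun a b c d => key4cross i j l hij hil hjl a b c d)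
    rw [H, hRkk k, hCkm k k]
    ring
  · intro i j k m hij hkm
    rw [hXd i j k, hXd i j m]
    have H := master (μ := μ) (fun a ω => e (i,a) ω - e (j,a) ω) (fun a ω => e (i,a) ω - e (j,a) ω)
      (fun a => T k a) (fun a => T m a) 4 (2*κ4 - 6)
      (fun a => hmemdiff i j a) (fun a => hmemdiff i j a)
      (fun a b => key2 i j hij a b) (fun a b => key2 i j hij a b)
      (fun a b c d => key4same i j hij a b c d)
    rw [H, hRkm k m, hCkm k m]
    ring
  · intro i j l k m hij hil hjl hkm
    rw [hXd i j k, hXd i l m]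
    have H := master (μ := μ) (fun a ω => e (i,a) ω - e (j,a) ω) (fun a ω => e (i,a) ω - e (l,a) ω)
      (fun a => T k a) (fun a => T m a) 1 (κ4 - 3)
      (fun a => hmemdiff i j a) (fun a => hmemdiff i l a)
      (fun a b => key2 i j hij a b) (fun a b => key2 i l hil a b)
      (fun a b c d => key4cross i j l hij hil hjl a b c d)
    rw [H, hRkm k m, hCkm k m]
    ring
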